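/- Topological Goursat's Lemma: Let G₁, G₂ be profinite groups and H a maximal closed subgroup of G₁ × G₂ such that both projections π₁(H) = G₁ and π₂(H) = G₂. Let N₁ = H ∩ (G₁ × {1}) and N₂ = H ∩ ({1} × G₂), identified as subgroups of G₁ and G₂. Then N₁ and N₂ are open normal subgroups of G₁ and G₂ respectively, the quotients G₁/N₁ and G₂/N₂ are simple groups, and there is an isomorphism G₁/N₁ ≅ G₂/N₂ whose graph is induced by H. -/

import Mathlib

open Pointwise


/-- A maximal closed subgroup: a proper closed subgroup not properly contained in
any other proper closed subgroup. -/
def IsMaximalClosedSubgroup {G : Type*} [Group G] [TopologicalSpace G]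
    (M : Subgroup G) : Prop :=
  IsClosed (M : Set G) ∧ M ≠ ⊤ ∧
    ∀ K : Subgroup G, IsClosed (K : Set G) → K ≠ ⊤ → M ≤ K → K = M

/-- In a profinite group, a maximal closed subgroup is open. -/
lemma IsMaximalClosedSubgroup.isOpen {G : Type*} [Group G] [TopologicalSpace G]
    [IsTopologicalGroup G] [CompactSpace G] [T2Space G] [TotallyDisconnectedSpace G]
    (H : Subgroup G) (hmax : IsMaximalClosedSubgroup H) : IsOpen (H : Set G) := by
  obtain ⟨hcl, hne, hm⟩ := hmax
  obtain ⟨x, hx⟩ : ∃ x, x ∉ H := by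
    by_contra h
    push_neg at h
    exact hne ((Subgroup.eq_top_iff' _).mpr h)
  have hcomp : IsCompact (H : Set G) := hcl.isCompact
  set T : Set G := (fun h => h⁻¹ * x) '' (H : Set G) with hT
  have hTclosed : IsClosed T :=
    (hcomp.image (by fun_prop)).isClosed
  have h1T : (1 : G) ∉ T := by
    rintro ⟨h, hh, he⟩
    exact hx (inv_mul_eq_one.mp he ▸ hh)
  obtain ⟨W, hW, h1W, hWT⟩ :=
    compact_exists_isClopen_in_isOpen hTclosed.isOpen_compl h1T
  obtain ⟨U, hU⟩ :=
    IsTopologicalGroup.exist_openNormalSubgroup_sub_clopen_nhds_of_one hW h1W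
  haveI : U.toSubgroup.Normal := U.isNormal'
  have hKcar : ((H ⊔ U.toSubgroup : Subgroup G) : Set G) = (H : Set G) * (U.toSubgroup : Set G) :=
    Subgroup.mul_normal _ _
  have hxK : x ∉ H ⊔ U.toSubgroup := by
    intro hx'
    rw [← SetLike.mem_coe, hKcar] at hx'
    obtain ⟨h, hh, u, hu, he⟩ := hx'
    have hmem : h⁻¹ * x ∈ T := ⟨h, hh, rfl⟩
    have hmem' : h⁻¹ * x ∈ U.toSubgroup := by
      rw [← he, inv_mul_cancel_left]
      exact hu
    exact hWT (hU hmem') hmem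
  have hKopen : IsOpen ((H ⊔ U.toSubgroup : Subgroup G) : Set G) :=
    Subgroup.isOpen_mono le_sup_right U.toOpenSubgroup.isOpen
  have hKeq : H ⊔ U.toSubgroup = H :=
    hm _ (Subgroup.isClosed_of_isOpen _ hKopen)
      (fun h => hxK (h ▸ Subgroup.mem_top x)) le_sup_left
  exact hKeq ▸ hKopen

/-- Topological Goursat's lemma for a maximal closed subgroup of a product of two
profinite groups with surjective projections. -/
theorem topological_goursat
    {G₁ G₂ : Type*} [Group G₁] [TopologicalSpace G₁] [IsTopologicalGroup G₁]
    [CompactSpace G₁] [T2Space G₁] [TotallyDisconnectedSpace G₁]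
    [Group G₂] [TopologicalSpace G₂] [IsTopologicalGroup G₂]
    [CompactSpace G₂] [T2Space G₂] [TotallyDisconnectedSpace G₂]
    (H : Subgroup (G₁ × G₂)) (hmax : IsMaximalClosedSubgroup H)
    (h₁ : Subgroup.map (MonoidHom.fst G₁ G₂) H = ⊤)
    (h₂ : Subgroup.map (MonoidHom.snd G₁ G₂) H = ⊤) :
    ∀ N₁ : Subgroup G₁, ∀ N₂ : Subgroup G₂,
      N₁ = Subgroup.comap (MonoidHom.inl G₁ G₂) H →
      N₂ = Subgroup.comap (MonoidHom.inr G₁ G₂) H →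
      N₁.Normal ∧ N₂.Normal ∧ IsOpen (N₁ : Set G₁) ∧ IsOpen (N₂ : Set G₂) ∧
      ∃ _ : N₁.Normal, ∃ _ : N₂.Normal,
        IsSimpleGroup (G₁ ⧸ N₁) ∧ IsSimpleGroup (G₂ ⧸ N₂) ∧
        ∃ φ : (G₁ ⧸ N₁) ≃* (G₂ ⧸ N₂),
          ∀ g₁ : G₁, ∀ g₂ : G₂,
            ((g₁, g₂) ∈ H ↔ φ (QuotientGroup.mk g₁) = QuotientGroup.mk g₂) := by
  intro N₁ N₂ hN₁ hN₂
  have hHopen : IsOpen (H : Set (G₁ × G₂)) := IsMaximalClosedSubgroup.isOpen H hmax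
  -- membership characterizations
  have memN₁ : ∀ g : G₁, g ∈ N₁ ↔ ((g, (1 : G₂)) ∈ H) := by
    intro g; rw [hN₁]; rfl
  have memN₂ : ∀ g : G₂, g ∈ N₂ ↔ (((1 : G₁), g) ∈ H) := by
    intro g; rw [hN₂]; rfl
  -- surjectivity of projections, in usable form
  have hsurj₁ : ∀ g : G₁, ∃ y : G₂, (g, y) ∈ H := by
    intro g
    have hg : g ∈ Subgroup.map (MonoidHom.fst G₁ G₂) H := h₁ ▸ Subgroup.mem_top g
    obtain ⟨p, hp, he⟩ := hg
    exact ⟨p.2, by rw [show (g, p.2) = p by simp [← he]]; exact hp⟩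
  have hsurj₂ : ∀ y : G₂, ∃ g : G₁, (g, y) ∈ H := by
    intro y
    have hg : y ∈ Subgroup.map (MonoidHom.snd G₁ G₂) H := h₂ ▸ Subgroup.mem_top y
    obtain ⟨p, hp, he⟩ := hg
    exact ⟨p.1, by rw [show (p.1, y) = p by simp [← he]]; exact hp⟩
  choose s hs using hsurj₁
  choose t ht using hsurj₂
  -- normality
  have hn₁ : N₁.Normal := by
    constructor
    intro n hn g
    rw [memN₁] at hn ⊢
    have hmem : ((g, s g) * (n, 1) * (g, s g)⁻¹ : G₁ × G₂) ∈ H :=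
      H.mul_mem (H.mul_mem (hs g) hn) (H.inv_mem (hs g))
    simpa using hmem
  have hn₂ : N₂.Normal := by
    constructor
    intro n hn g
    rw [memN₂] at hn ⊢
    have hmem : ((t g, g) * (1, n) * (t g, g)⁻¹ : G₁ × G₂) ∈ H :=
      H.mul_mem (H.mul_mem (ht g) hn) (H.inv_mem (ht g))
    simpa using hmem
  -- openness
  have hopen₁ : IsOpen (N₁ : Set G₁) := by
    rw [hN₁, Subgroup.coe_comap]
    exact hHopen.preimage (continuous_id.prodMk continuous_const)
  have hopen₂ : IsOpen (N₂ : Set G₂) := by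
    rw [hN₂, Subgroup.coe_comap]
    exact hHopen.preimage (continuous_const.prodMk continuous_id)
  haveI := hn₁
  haveI := hn₂
  -- key well-definedness lemma
  have key : ∀ g₁ : G₁, ∀ g₂ : G₂, (g₁, g₂) ∈ H →
      (QuotientGroup.mk (s g₁) : G₂ ⧸ N₂) = QuotientGroup.mk g₂ := by
    intro g₁ g₂ hg
    have hmem : ((g₁, s g₁)⁻¹ * (g₁, g₂) : G₁ × G₂) ∈ H :=
      H.mul_mem (H.inv_mem (hs g₁)) hg
    have : (s g₁)⁻¹ * g₂ ∈ N₂ := by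
      rw [memN₂]
      simpa using hmem
    exact (QuotientGroup.eq).mpr this
  -- the homomorphism
  have hmul : ∀ a b : G₁,
      (QuotientGroup.mk (s (a * b)) : G₂ ⧸ N₂) = QuotientGroup.mk (s a) * QuotientGroup.mk (s b) := by
    intro a b
    have hmem : ((a, s a) * (b, s b) : G₁ × G₂) ∈ H := H.mul_mem (hs a) (hs b)
    have hmem' : ((a * b, s a * s b) : G₁ × G₂) ∈ H := by simpa using hmem
    rw [key (a * b) (s a * s b) hmem']
    rfl
  let f : G₁ →* G₂ ⧸ N₂ := MonoidHom.mk' (fun g => QuotientGroup.mk (s g)) hmul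
  have hker : ∀ n ∈ N₁, f n = 1 := by
    intro n hn
    rw [memN₁] at hn
    show (QuotientGroup.mk (s n) : G₂ ⧸ N₂) = 1
    rw [key n 1 hn]
    simp
  let φ₀ : G₁ ⧸ N₁ →* G₂ ⧸ N₂ := QuotientGroup.lift N₁ f hker
  have hφ₀ : ∀ g : G₁, φ₀ (QuotientGroup.mk g) = QuotientGroup.mk (s g) := fun g => rfl
  have hsurj : Function.Surjective φ₀ := by
    intro q
    obtain ⟨y, rfl⟩ := QuotientGroup.mk_surjective q
    exact ⟨QuotientGroup.mk (t y), by rw [hφ₀]; exact key (t y) y (ht y)⟩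
  have hinj : Function.Injective φ₀ := by
    rw [injective_iff_map_eq_one]
    intro a ha
    obtain ⟨g, rfl⟩ := QuotientGroup.mk_surjective a
    rw [hφ₀] at ha
    have hsg : s g ∈ N₂ := (QuotientGroup.eq_one_iff _).mp ha
    rw [memN₂] at hsg
    have hmem : ((g, s g) * ((1 : G₁), s g)⁻¹ : G₁ × G₂) ∈ H :=
      H.mul_mem (hs g) (H.inv_mem hsg)
    have hg : g ∈ N₁ := by rw [memN₁]; simpa using hmem
    exact (QuotientGroup.eq_one_iff g).mpr hg
  let φ : (G₁ ⧸ N₁) ≃* (G₂ ⧸ N₂) := MulEquiv.ofBijective φ₀ ⟨hinj, hsurj⟩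
  have hφ : ∀ g : G₁, φ (QuotientGroup.mk g) = QuotientGroup.mk (s g) := fun g => rfl
  -- graph property
  have hgraph : ∀ g₁ : G₁, ∀ g₂ : G₂,
      ((g₁, g₂) ∈ H ↔ φ (QuotientGroup.mk g₁) = QuotientGroup.mk g₂) := by
    intro g₁ g₂
    constructor
    · intro hg
      rw [hφ]
      exact key g₁ g₂ hg
    · intro hg
      rw [hφ] at hg
      have : (s g₁)⁻¹ * g₂ ∈ N₂ := QuotientGroup.eq.mp hg
      rw [memN₂] at this
      have hmem : ((g₁, s g₁) * ((1 : G₁), (s g₁)⁻¹ * g₂) : G₁ × G₂) ∈ H :=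
        H.mul_mem (hs g₁) this
      simpa using hmem
  -- N₁ is proper
  have hN₁top : N₁ ≠ ⊤ := by
    intro htop
    apply hmax.2.1
    rw [Subgroup.eq_top_iff']
    rintro ⟨x, y⟩
    have hx1 : ((x, (1 : G₂)) : G₁ × G₂) ∈ H := by
      rw [← memN₁]; rw [htop]; trivial
    have hty : ((t y, (1 : G₂)) : G₁ × G₂) ∈ H := by
      rw [← memN₁]; rw [htop]; trivial
    have h1y : (((1 : G₁), y) : G₁ × G₂) ∈ H := by
      have := H.mul_mem (H.inv_mem hty) (ht y)
      simpa using this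
    have := H.mul_mem hx1 h1y
    simpa using this
  -- nontriviality of the quotient
  obtain ⟨g₀, hg₀⟩ : ∃ g : G₁, g ∉ N₁ := by
    by_contra h
    push_neg at h
    exact hN₁top ((Subgroup.eq_top_iff' _).mpr h)
  haveI hQnt : Nontrivial (G₁ ⧸ N₁) :=
    ⟨⟨QuotientGroup.mk g₀, 1, by
      intro h
      exact hg₀ ((QuotientGroup.eq_one_iff g₀).mp h)⟩⟩
  -- simplicity of G₁ ⧸ N₁
  have hsimple₁ : IsSimpleGroup (G₁ ⧸ N₁) := by
    constructor
    intro M hM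
    by_cases hMtop : M = ⊤
    · right; exact hMtop
    left
    -- construct the subgroup K of G₁ × G₂
    set ψ : G₁ × G₂ → G₁ ⧸ N₁ :=
      fun p => QuotientGroup.mk p.1 * (φ.symm (QuotientGroup.mk p.2))⁻¹ with hψ
    have ψ_mul : ∀ a b : G₁ × G₂, ψ (a * b) =
        QuotientGroup.mk a.1 * ((QuotientGroup.mk b.1 : G₁ ⧸ N₁) *
          (φ.symm (QuotientGroup.mk b.2))⁻¹) * (QuotientGroup.mk a.1 : G₁ ⧸ N₁)⁻¹ *
          ((QuotientGroup.mk a.1 : G₁ ⧸ N₁) * (φ.symm (QuotientGroup.mk a.2))⁻¹) := by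
      intro a b
      show (QuotientGroup.mk (a.1 * b.1) : G₁ ⧸ N₁) *
          (φ.symm (QuotientGroup.mk (a.2 * b.2)))⁻¹ = _
      rw [show (QuotientGroup.mk (a.1 * b.1) : G₁ ⧸ N₁) =
        QuotientGroup.mk a.1 * QuotientGroup.mk b.1 from rfl]
      rw [show (QuotientGroup.mk (a.2 * b.2) : G₂ ⧸ N₂) =
        QuotientGroup.mk a.2 * QuotientGroup.mk b.2 from rfl]
      rw [map_mul]
      group
    let K : Subgroup (G₁ × G₂) :=
      { carrier := {p | ψ p ∈ M}
        one_mem' := by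
          show ψ 1 ∈ M
          have : ψ 1 = 1 := by simp [hψ]
          rw [this]; exact M.one_mem
        mul_mem' := by
          intro a b ha hb
          show ψ (a * b) ∈ M
          rw [ψ_mul a b]
          exact M.mul_mem (hM.conj_mem _ hb _) ha
        inv_mem' := by
          intro a ha
          show ψ a⁻¹ ∈ M
          have he : ψ a⁻¹ = (QuotientGroup.mk a.1 : G₁ ⧸ N₁)⁻¹ * (ψ a)⁻¹ *
              ((QuotientGroup.mk a.1 : G₁ ⧸ N₁)⁻¹)⁻¹ := by
            show (QuotientGroup.mk a.1⁻¹ : G₁ ⧸ N₁) *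
                (φ.symm (QuotientGroup.mk a.2⁻¹))⁻¹ = _
            rw [show (QuotientGroup.mk a.1⁻¹ : G₁ ⧸ N₁) =
              (QuotientGroup.mk a.1 : G₁ ⧸ N₁)⁻¹ from rfl]
            rw [show (QuotientGroup.mk a.2⁻¹ : G₂ ⧸ N₂) =
              (QuotientGroup.mk a.2 : G₂ ⧸ N₂)⁻¹ from rfl]
            rw [map_inv, hψ]
            group
          rw [he]
          exact hM.conj_mem _ (M.inv_mem ha) _ }
    have hHK : H ≤ K := by
      rintro ⟨a, b⟩ hab
      show ψ (a, b) ∈ M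
      have : φ (QuotientGroup.mk a) = QuotientGroup.mk b := (hgraph a b).mp hab
      have hsymm : φ.symm (QuotientGroup.mk b) = QuotientGroup.mk a := by
        rw [← this, MulEquiv.symm_apply_apply]
      have : ψ (a, b) = 1 := by rw [hψ]; simp [hsymm]
      rw [this]; exact M.one_mem
    have hprodK : (N₁.prod N₂) ≤ K := by
      rintro ⟨a, b⟩ ⟨ha, hb⟩
      show ψ (a, b) ∈ M
      have ha1 : (QuotientGroup.mk a : G₁ ⧸ N₁) = 1 := (QuotientGroup.eq_one_iff a).mpr ha
      have hb1 : (QuotientGroup.mk b : G₂ ⧸ N₂) = 1 := (QuotientGroup.eq_one_iff b).mpr hb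
      have : ψ (a, b) = 1 := by rw [hψ]; simp [ha1, hb1]
      rw [this]; exact M.one_mem
    have hKopen : IsOpen (K : Set (G₁ × G₂)) := by
      apply Subgroup.isOpen_mono hprodK
      rw [Subgroup.coe_prod]
      exact hopen₁.prod hopen₂
    have hKclosed : IsClosed (K : Set (G₁ × G₂)) := Subgroup.isClosed_of_isOpen _ hKopen
    have hKne : K ≠ ⊤ := by
      intro hKtop
      apply hMtop
      rw [Subgroup.eq_top_iff']
      intro q
      obtain ⟨g, rfl⟩ := QuotientGroup.mk_surjective q
      have : ((g, (1 : G₂)) : G₁ × G₂) ∈ K := hKtop ▸ Subgroup.mem_top _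
      have hg : ψ (g, 1) ∈ M := this
      have : ψ (g, (1 : G₂)) = QuotientGroup.mk g := by rw [hψ]; simp
      rwa [this] at hg
    have hKH : K = H := hmax.2.2 K hKclosed hKne hHK
    -- conclude M = ⊥
    rw [eq_bot_iff]
    intro m hm
    obtain ⟨g, rfl⟩ := QuotientGroup.mk_surjective m
    have hgK : ((g, (1 : G₂)) : G₁ × G₂) ∈ K := by
      show ψ (g, 1) ∈ M
      have : ψ (g, (1 : G₂)) = QuotientGroup.mk g := by rw [hψ]; simp
      rw [this]; exact hm
    rw [hKH] at hgK
    have : g ∈ N₁ := (memN₁ g).mpr hgK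
    have : (QuotientGroup.mk g : G₁ ⧸ N₁) = 1 := (QuotientGroup.eq_one_iff g).mpr this
    rw [this]; exact Subgroup.one_mem ⊥
  haveI := hsimple₁
  haveI : Nontrivial (G₂ ⧸ N₂) := φ.toEquiv.symm.nontrivial
  have hsimple₂ : IsSimpleGroup (G₂ ⧸ N₂) :=
    IsSimpleGroup.isSimpleGroup_of_surjective φ.toMonoidHom φ.surjective
  exact ⟨hn₁, hn₂, hopen₁, hopen₂, hn₁, hn₂, hsimple₁, hsimple₂, φ, hgraph⟩
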